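/- Let G be a finite simple graph, A ⊆ V(G), and let Y ⊆ A be a vertex cover of the induced subgraph G[A]. Let W = {u ∈ V(G) \ A : u is adjacent in G to some vertex of A \ Y}, and let Z be a vertex cover of the induced subgraph G[(V(G) \ A) \ W]. Then Y ∪ W ∪ Z is a vertex cover of G. (Correctness of step 2 of the disjoint compression algorithm.) -/

import Mathlib

/-- The graph `G²` on vertex set `V × Bool` (copy 1 = `false`, copy 2 = `true`):
edges `{(u,i),(v,i)}` for every edge `{u,v}` of `G`, plus `{(v,1),(v,2)}` for every `v`. -/
def doubledGraph {V : Type*} (G : SimpleGraph V) : SimpleGraph (V × Bool) where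
  Adj x y := (x.2 = y.2 ∧ G.Adj x.1 y.1) ∨ (x.1 = y.1 ∧ x.2 ≠ y.2)
  symm := ⟨by
    rintro ⟨u, i⟩ ⟨v, j⟩ (⟨h1, h2⟩ | ⟨h1, h2⟩)
    · exact Or.inl ⟨h1.symm, h2.symm⟩
    · exact Or.inr ⟨h1.symm, h2.symm⟩⟩
  loopless := ⟨by
    rintro ⟨u, i⟩ (⟨_, h⟩ | ⟨_, h⟩)
    · exact G.loopless.irrefl u h
    · exact h rfl⟩

/-- `X` is a vertex cover of `G`: it contains an endpoint of every edge. -/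
def IsVertexCover {α : Type*} (G : SimpleGraph α) (X : Set α) : Prop :=
  ∀ ⦃u v : α⦄, G.Adj u v → u ∈ X ∨ v ∈ X

/-- `X` is a vertex cover of the induced subgraph `G[A]`: it contains an endpoint of
every edge of `G` with both endpoints in `A`. -/
def IsVertexCoverOn {α : Type*} (G : SimpleGraph α) (A X : Set α) : Prop :=
  ∀ ⦃u v : α⦄, G.Adj u v → u ∈ A → v ∈ A → u ∈ X ∨ v ∈ X

/-- Correctness of step 2 of the disjoint compression algorithm: if `Y ⊆ A` is a vertex
cover of `G[A]`, `W` is the set of vertices outside `A` adjacent to some vertex of `A \ Y`,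
and `Z` is a vertex cover of `G[(V(G) \ A) \ W]`, then `Y ∪ W ∪ Z` is a vertex cover of `G`. -/
theorem stmt11 {V : Type*} (G : SimpleGraph V) (A Y W Z : Set V)
    (hYA : Y ⊆ A) (hY : IsVertexCoverOn G A Y)
    (hW : W = {u : V | u ∈ Aᶜ ∧ ∃ w ∈ A \ Y, G.Adj u w})
    (hZsub : Z ⊆ Aᶜ \ W) (hZ : IsVertexCoverOn G (Aᶜ \ W) Z) :
    IsVertexCover G (Y ∪ W ∪ Z) := by
  intro u v huv
  by_cases hu : u ∈ A <;> by_cases hv : v ∈ A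
  · rcases hY huv hu hv with h | h
    · exact Or.inl (Or.inl (Or.inl h))
    · exact Or.inr (Or.inl (Or.inl h))
  · by_cases hy : u ∈ Y
    · exact Or.inl (Or.inl (Or.inl hy))
    · exact Or.inr (Or.inl (Or.inr (hW ▸ ⟨hv, u, ⟨hu, hy⟩, huv.symm⟩)))
  · by_cases hy : v ∈ Y
    · exact Or.inr (Or.inl (Or.inl hy))
    · exact Or.inl (Or.inl (Or.inr (hW ▸ ⟨hu, v, ⟨hv, hy⟩, huv⟩)))
  · by_cases hw : u ∈ W
    · exact Or.inl (Or.inl (Or.inr hw))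
    · by_cases hw' : v ∈ W
      · exact Or.inr (Or.inl (Or.inr hw'))
      · rcases hZ huv ⟨hu, hw⟩ ⟨hv, hw'⟩ with h | h
        · exact Or.inl (Or.inr h)
        · exact Or.inr (Or.inr h)
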